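/- For positive constants c_1,…,c_N and positive reals m, M, C with m ≤ c_k ≤ M for all k, ∏_{k=1}^N c_k ≥ C, and m^N ≤ C ≤ M^N, let v = min{ j ∈ ℤ : M^j · m^{N-j} ≥ C }. Then ∑_{k=1}^N 1/c_k² ≤ (N−v)/m² + (v−1)/M² + (m^{N−v} M^{v−1} / C)². -/

import Mathlib

open Finset

lemma aux_smooth_ineq (c1 c2 ρ : ℝ) (h1 : 0 < c1) (h2 : 0 < c2) (hρ : 1 ≤ ρ)
    (h : c1 ≤ ρ * c2) :
    1/c1^2 + 1/c2^2 ≤ 1/(c1/ρ)^2 + 1/(c2*ρ)^2 := by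
  have hρ0 : 0 < ρ := lt_of_lt_of_le one_pos hρ
  have e1 : 1/(c1/ρ)^2 - 1/c1^2 = (ρ^2-1)/c1^2 := by field_simp
  have e2 : 1/c2^2 - 1/(c2*ρ)^2 = (ρ^2-1)/(ρ^2*c2^2) := by field_simp
  have key : (ρ^2-1)/(ρ^2*c2^2) ≤ (ρ^2-1)/c1^2 := by
    apply div_le_div_of_nonneg_left (by nlinarith) (by positivity)
    nlinarith
  linarith

lemma aux_key (N : ℕ) (m M C B : ℝ) (hm : 0 < m)
    (hbase : ∀ c : Fin N → ℝ, (∀ k, m ≤ c k ∧ c k ≤ M) → C ≤ ∏ k, c k →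
      (univ.filter fun k => c k ≠ m ∧ c k ≠ M).card ≤ 1 → ∑ k, 1/(c k)^2 ≤ B) :
    ∀ (n : ℕ) (c : Fin N → ℝ), (∀ k, m ≤ c k ∧ c k ≤ M) → C ≤ ∏ k, c k →
      (univ.filter fun k => c k ≠ m ∧ c k ≠ M).card ≤ n → ∑ k, 1/(c k)^2 ≤ B := by
  intro n
  induction n with
  | zero => exact fun c h1 h2 h3 => hbase c h1 h2 (le_trans h3 (by norm_num))
  | succ n ih =>
    intro c h1 h2 h3
    by_cases hle : (univ.filter fun k => c k ≠ m ∧ c k ≠ M).card ≤ 1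
    · exact hbase c h1 h2 hle
    · push_neg at hle
      obtain ⟨k₁, hk₁, k₂, hk₂, hne⟩ := Finset.one_lt_card.mp hle
      simp only [mem_filter, mem_univ, true_and] at hk₁ hk₂
      have hpos : ∀ k, 0 < c k := fun k => lt_of_lt_of_le hm (h1 k).1
      have hk₁m : m < c k₁ := lt_of_le_of_ne (h1 k₁).1 (Ne.symm hk₁.1)
      have hk₂M : c k₂ < M := lt_of_le_of_ne (h1 k₂).2 hk₂.2
      set ρ := min (c k₁ / m) (M / c k₂) with hρdef
      have hρ1 : 1 ≤ ρ := le_min (by rw [le_div_iff₀ (by exact hm)]; linarith [(h1 k₁).1])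
        (by rw [le_div_iff₀ (hpos k₂)]; linarith [(h1 k₂).2])
      have hρ0 : 0 < ρ := lt_of_lt_of_le one_pos hρ1
      set c' : Fin N → ℝ := Function.update (Function.update c k₁ (c k₁ / ρ)) k₂ (c k₂ * ρ) with hc'def
      have hc'k₂ : c' k₂ = c k₂ * ρ := Function.update_self _ _ _
      have hc'k₁ : c' k₁ = c k₁ / ρ := by
        rw [hc'def, Function.update_of_ne hne, Function.update_self]
      have hc'other : ∀ j, j ≠ k₁ → j ≠ k₂ → c' j = c j := fun j hj1 hj2 => by
        rw [hc'def, Function.update_of_ne hj2, Function.update_of_ne hj1]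
      have hρa : ρ ≤ c k₁ / m := min_le_left _ _
      have hρb : ρ ≤ M / c k₂ := min_le_right _ _
      have hρa' : ρ * m ≤ c k₁ := (le_div_iff₀ hm).mp hρa
      have hρb' : ρ * c k₂ ≤ M := (le_div_iff₀ (hpos k₂)).mp hρb
      have hbk1 : m ≤ c' k₁ ∧ c' k₁ ≤ M := by
        rw [hc'k₁]
        refine ⟨?_, ?_⟩
        · rw [le_div_iff₀ hρ0]; nlinarith
        · exact le_trans (div_le_self (le_of_lt (hpos k₁)) hρ1) (h1 k₁).2
      have hbk2 : m ≤ c' k₂ ∧ c' k₂ ≤ M := by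
        rw [hc'k₂]
        exact ⟨by nlinarith [(h1 k₂).1], by nlinarith⟩
      have hb : ∀ j, m ≤ c' j ∧ c' j ≤ M := by
        intro j
        by_cases e2 : j = k₂
        · rw [e2]; exact hbk2
        · by_cases e1 : j = k₁
          · rw [e1]; exact hbk1
          · rw [hc'other j e1 e2]; exact h1 j
      -- product
      have hk₁mem : k₁ ∈ univ.erase k₂ := mem_erase.mpr ⟨hne, mem_univ _⟩
      have hmem2 : k₁ ∈ univ \ {k₂} := by simp [hne]
      have hprod' : ∏ k, c' k = ∏ k, c k := by
        rw [hc'def, Finset.prod_update_of_mem (mem_univ k₂), Finset.prod_update_of_mem hmem2,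
          Finset.prod_eq_mul_prod_sdiff_singleton_of_mem (mem_univ k₂) c,
          Finset.prod_eq_mul_prod_sdiff_singleton_of_mem hmem2 c]
        field_simp
      -- sum
      have hsum' : ∑ k, 1/(c k)^2 ≤ ∑ k, 1/(c' k)^2 := by
        rw [← Finset.sum_erase_add _ _ (mem_univ k₂), ← Finset.sum_erase_add _ _ hk₁mem,
          ← Finset.sum_erase_add _ (fun k => 1/(c' k)^2) (mem_univ k₂),
          ← Finset.sum_erase_add _ (fun k => 1/(c' k)^2) hk₁mem]
        have : ∑ x ∈ (univ.erase k₂).erase k₁, 1/(c' x)^2 = ∑ x ∈ (univ.erase k₂).erase k₁, 1/(c x)^2 := by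
          apply Finset.sum_congr rfl
          intro x hx
          rw [hc'other x (mem_erase.mp hx).1 (mem_erase.mp (mem_erase.mp hx).2).1]
        rw [this, hc'k₁, hc'k₂]
        have hc1le : c k₁ ≤ ρ * c k₂ := by
          rcases min_choice (c k₁ / m) (M / c k₂) with h | h
          · rw [hρdef, h, div_mul_eq_mul_div, le_div_iff₀ hm]
            nlinarith [(h1 k₂).1, hpos k₁]
          · rw [hρdef, h, div_mul_cancel₀ _ (ne_of_gt (hpos k₂))]
            exact (h1 k₁).2
        have := aux_smooth_ineq (c k₁) (c k₂) ρ (hpos k₁) (hpos k₂) hρ1 hc1le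
        linarith
      -- card decreases
      have hcard' : (univ.filter fun k => c' k ≠ m ∧ c' k ≠ M).card ≤ n := by
        obtain ⟨kstar, hks1, hks2⟩ : ∃ kstar, (kstar = k₁ ∨ kstar = k₂) ∧ (c' kstar = m ∨ c' kstar = M) := by
          rcases min_choice (c k₁ / m) (M / c k₂) with h | h
          · exact ⟨k₁, Or.inl rfl, Or.inl (by
              rw [hc'k₁, hρdef, h]; field_simp
              rw [div_self (ne_of_gt (hpos k₁))])⟩
          · exact ⟨k₂, Or.inr rfl, Or.inr (by
              rw [hc'k₂, hρdef, h]; field_simp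
              rw [mul_comm, mul_div_assoc, div_self (ne_of_gt (hpos k₂)), mul_one])⟩
        have hsub : (univ.filter fun k => c' k ≠ m ∧ c' k ≠ M) ⊆
            (univ.filter fun k => c k ≠ m ∧ c k ≠ M).erase kstar := by
          intro j hj
          simp only [mem_filter, mem_univ, true_and] at hj
          rw [mem_erase]
          constructor
          · rintro rfl; rcases hks2 with h | h
            · exact hj.1 h
            · exact hj.2 h
          · simp only [mem_filter, mem_univ, true_and]
            by_cases e1 : j = k₁
            · subst e1; exact hk₁
            · by_cases e2 : j = k₂
              · subst e2; exact hk₂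
              · rwa [hc'other j e1 e2] at hj
        have hksmem : kstar ∈ (univ.filter fun k => c k ≠ m ∧ c k ≠ M) := by
          simp only [mem_filter, mem_univ, true_and]
          rcases hks1 with rfl | rfl
          · exact hk₁
          · exact hk₂
        calc (univ.filter fun k => c' k ≠ m ∧ c' k ≠ M).card
            ≤ ((univ.filter fun k => c k ≠ m ∧ c k ≠ M).erase kstar).card := Finset.card_le_card hsub
          _ = (univ.filter fun k => c k ≠ m ∧ c k ≠ M).card - 1 := Finset.card_erase_of_mem hksmem
          _ ≤ n := by omega
      exact le_trans hsum' (ih c' hb (by rw [hprod']; exact h2) hcard')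

lemma aux_base (N : ℕ) (hN : 0 < N) (m M C : ℝ) (hm : 0 < m) (hmM : m < M) (hC : 0 < C)
    (w : ℕ) (hw1 : 1 ≤ w) (hwN : w ≤ N)
    (ht1 : M^(w-1) * m^(N-w+1) < C) (ht2 : C ≤ M^w * m^(N-w))
    (c : Fin N → ℝ) (hc : ∀ k, m ≤ c k ∧ c k ≤ M)
    (hprod : C ≤ ∏ k, c k)
    (hcard : (univ.filter fun k => c k ≠ m ∧ c k ≠ M).card ≤ 1) :
    ∑ k, 1/(c k)^2 ≤ ((N-w : ℕ) : ℝ)/m^2 + ((w-1 : ℕ) : ℝ)/M^2 + (m^(N-w)*M^(w-1)/C)^2 := by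
  have hM : 0 < M := lt_trans hm hmM
  have hpos : ∀ k, 0 < c k := fun k => lt_of_lt_of_le hm (hc k).1
  -- find k₀ such that all other coordinates are m or M
  obtain ⟨k₀, hk₀⟩ : ∃ k₀ : Fin N, ∀ k, k ≠ k₀ → c k = m ∨ c k = M := by
    rcases (univ.filter fun k => c k ≠ m ∧ c k ≠ M).eq_empty_or_nonempty with he | ⟨k₀, hk₀⟩
    · refine ⟨⟨0, hN⟩, fun k _ => ?_⟩
      have : k ∉ (univ.filter fun k => c k ≠ m ∧ c k ≠ M) := by rw [he]; exact notMem_empty k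
      simp only [mem_filter, mem_univ, true_and, not_and_or, not_not] at this
      tauto
    · refine ⟨k₀, fun k hk => ?_⟩
      by_contra hcon
      push_neg at hcon
      have hkmem : k ∈ (univ.filter fun j => c j ≠ m ∧ c j ≠ M) := by
        simp only [mem_filter, mem_univ, true_and]; exact hcon
      exact hk (Finset.card_le_one.mp hcard k hkmem k₀ hk₀)
  set x := c k₀ with hxdef
  set S := (univ.erase k₀).filter (fun k => c k = M) with hSdef
  set T := (univ.erase k₀).filter (fun k => ¬ c k = M) with hTdef
  set q := S.card with hqdef
  set p := T.card with hpdef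
  have hTm : ∀ k ∈ T, c k = m := by
    intro k hk
    rw [hTdef, mem_filter, mem_erase] at hk
    rcases hk₀ k hk.1.1 with h | h
    · exact h
    · exact absurd h hk.2
  have hSM : ∀ k ∈ S, c k = M := fun k hk => (mem_filter.mp hk).2
  have hpq : q + p = N - 1 := by
    rw [hqdef, hpdef, hSdef, hTdef, Finset.card_filter_add_card_filter_not,
      Finset.card_erase_of_mem (mem_univ k₀), card_univ, Fintype.card_fin]
  have hprodeq : ∏ k, c k = x * (M^q * m^p) := by
    rw [← Finset.mul_prod_erase univ c (mem_univ k₀),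
      ← Finset.prod_filter_mul_prod_filter_not (univ.erase k₀) (fun k => c k = M) c]
    congr 1
    congr 1
    · rw [Finset.prod_congr rfl hSM, Finset.prod_const]
    · rw [Finset.prod_congr rfl hTm, Finset.prod_const]
  have hsumeq : ∑ k, 1/(c k)^2 = 1/x^2 + (q * (1/M^2) + p * (1/m^2)) := by
    rw [← Finset.add_sum_erase univ (fun k => 1/(c k)^2) (mem_univ k₀),
      ← Finset.sum_filter_add_sum_filter_not (univ.erase k₀) (fun k => c k = M)
        (fun k => 1/(c k)^2)]
    congr 1
    congr 1
    · rw [Finset.sum_congr rfl (fun k hk => by rw [hSM k hk]), Finset.sum_const, nsmul_eq_mul]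
    · rw [Finset.sum_congr rfl (fun k hk => by rw [hTm k hk]), Finset.sum_const, nsmul_eq_mul]
  have hxm : m ≤ x := (hc k₀).1
  have hxM : x ≤ M := (hc k₀).2
  have hx0 : 0 < x := hpos k₀
  have hCle : C ≤ x * (M^q * m^p) := hprodeq ▸ hprod
  have hA : (0:ℝ) < m^(N-w)*M^(w-1) := by positivity
  rw [hsumeq]
  by_cases hqw : w ≤ q
  · -- many M's case
    have hqN : q + p = N - 1 := hpq
    have f1 : 1/x^2 ≤ 1/m^2 := by
      apply one_div_le_one_div_of_le (by positivity)
      exact pow_le_pow_left₀ (le_of_lt hm) hxm 2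
    have f2 : 1/M^2 ≤ (m^(N-w)*M^(w-1)/C)^2 := by
      have h1M : 1/M ≤ m^(N-w)*M^(w-1)/C := by
        rw [div_le_div_iff₀ hM hC]
        calc 1 * C = C := one_mul C
          _ ≤ M^w * m^(N-w) := ht2
          _ = m^(N-w)*M^(w-1)*M := by
              rw [mul_assoc, ← pow_succ]
              have : w - 1 + 1 = w := by omega
              rw [this]; ring
      calc 1/M^2 = (1/M)^2 := by rw [div_pow, one_pow]
        _ ≤ (m^(N-w)*M^(w-1)/C)^2 := by
            apply pow_le_pow_left₀ (by positivity) h1M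
    have hmm2 : 1/M^2 ≤ 1/m^2 := by
      apply one_div_le_one_div_of_le (by positivity)
      exact pow_le_pow_left₀ (le_of_lt hm) (le_of_lt hmM) 2
    have hcast1 : ((N-w : ℕ) : ℝ) = (N:ℝ) - w := by
      rw [Nat.cast_sub hwN]
    have hcast2 : ((w-1 : ℕ) : ℝ) = (w:ℝ) - 1 := by
      rw [Nat.cast_sub hw1, Nat.cast_one]
    have hcast3 : (p:ℝ) = (N:ℝ) - 1 - q := by
      have : p = N - 1 - q := by omega
      rw [this]
      rw [Nat.cast_sub (by omega), Nat.cast_sub (by omega), Nat.cast_one]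
    have hqw' : (w:ℝ) ≤ q := by exact_mod_cast hqw
    have hint : ((q:ℝ) - w) * (1/m^2 - 1/M^2) ≥ 0 :=
      mul_nonneg (by linarith) (by linarith)
    have e1 : ((N:ℝ) - w)/m^2 = ((N:ℝ)-w) * (1/m^2) := by ring
    have e2 : ((w:ℝ) - 1)/M^2 = ((w:ℝ)-1) * (1/M^2) := by ring
    rw [hcast1, hcast2, hcast3, e1, e2]
    linarith [hint]
  · -- q ≤ w - 1 : show q = w - 1
    push_neg at hqw
    have hq : q = w - 1 := by
      by_contra hne
      have hq2 : q + 2 ≤ w := by omega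
      have hchain : C ≤ M^(q+1) * m^(N-1-q) := by
        calc C ≤ x * (M^q * m^p) := hCle
          _ ≤ M * (M^q * m^p) := by
              apply mul_le_mul_of_nonneg_right hxM (by positivity)
          _ = M^(q+1) * m^(N-1-q) := by
              have hp' : p = N - 1 - q := by omega
              rw [hp', pow_succ]; ring
      have hcomp : M^(q+1) * m^(N-1-q) ≤ M^(w-1) * m^(N-w+1) := by
        have he : (q+1) + (w-2-q) = w - 1 := by omega
        have he2 : N - 1 - q = (N-w+1) + (w-2-q) := by omega
        have hmono : m^(w-2-q) ≤ M^(w-2-q) := pow_le_pow_left₀ (le_of_lt hm) (le_of_lt hmM) _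
        calc M^(q+1) * m^(N-1-q) = M^(q+1) * m^(N-w+1) * m^(w-2-q) := by
              rw [he2, pow_add]; ring
          _ ≤ M^(q+1) * m^(N-w+1) * M^(w-2-q) :=
              mul_le_mul_of_nonneg_left hmono (by positivity)
          _ = M^(w-1) * m^(N-w+1) := by rw [← he, pow_add]; ring
      linarith
    have hp : p = N - w := by omega
    have hxt : C / (m^(N-w)*M^(w-1)) ≤ x := by
      rw [div_le_iff₀ hA]
      calc C ≤ x * (M^q * m^p) := hCle
        _ = x * (m^(N-w)*M^(w-1)) := by rw [hq, hp]; ring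
    have f1 : 1/x^2 ≤ (m^(N-w)*M^(w-1)/C)^2 := by
      have h1x : 1/x ≤ m^(N-w)*M^(w-1)/C := by
        rw [div_le_div_iff₀ hx0 hC]
        rw [div_le_iff₀ hA] at hxt
        linarith
      calc 1/x^2 = (1/x)^2 := by rw [div_pow, one_pow]
        _ ≤ _ := pow_le_pow_left₀ (by positivity) h1x 2
    have hcq : ((w-1:ℕ) : ℝ) = (q:ℝ) := by rw [hq]
    have hcp : ((N-w:ℕ) : ℝ) = (p:ℝ) := by rw [hp]
    have e1 : (p:ℝ)/m^2 = (p:ℝ) * (1/m^2) := by ring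
    have e2 : (q:ℝ)/M^2 = (q:ℝ) * (1/M^2) := by ring
    rw [hcq, hcp, e1, e2]
    linarith

theorem stmt_0 (N : ℕ) (hN : 0 < N) (c : Fin N → ℝ) (m M C : ℝ)
    (hm : 0 < m) (hM : 0 < M) (hC : 0 < C)
    (hc : ∀ k, m ≤ c k ∧ c k ≤ M)
    (hprod : C ≤ ∏ k, c k)
    (hmC : m ^ N ≤ C) (hCM : C ≤ M ^ N)
    (v : ℤ)
    (hv : IsLeast {j : ℤ | C ≤ M ^ j * m ^ ((N : ℤ) - j)} v) :
    ∑ k, 1 / (c k) ^ 2 ≤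
      ((N : ℝ) - v) / m ^ 2 + ((v : ℝ) - 1) / M ^ 2 +
        (m ^ ((N : ℤ) - v) * M ^ (v - 1) / C) ^ 2 := by
  have hposc : ∀ k, 0 < c k := fun k => lt_of_lt_of_le hm (hc k).1
  have hmM' : m ≤ M := le_trans (hc ⟨0,hN⟩).1 (hc ⟨0,hN⟩).2
  rcases eq_or_lt_of_le hmM' with heq | hmM
  · -- m = M : the set is all of ℤ, contradicting IsLeast
    exfalso
    subst heq
    have hall : ∀ j : ℤ, C ≤ m ^ j * m ^ ((N:ℤ) - j) := by
      intro j
      rw [← zpow_add₀ (ne_of_gt hm)]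
      have : j + ((N:ℤ) - j) = (N:ℤ) := by ring
      rw [this, zpow_natCast]
      exact hCM
    have h1 := hv.2 (hall (v - 1))
    omega
  · have hvN : v ≤ (N:ℤ) := by
      apply hv.2
      show C ≤ M ^ (N:ℤ) * m ^ ((N:ℤ) - (N:ℤ))
      simp only [sub_self, zpow_zero, mul_one, zpow_natCast]
      exact hCM
    have hv0 : 0 ≤ v := by
      by_contra hneg
      push_neg at hneg
      have hvmem := hv.1
      have hkey : M ^ v * m ^ ((N:ℤ) - v) < m ^ N := by
        have hrw : M ^ v * m ^ ((N:ℤ) - v) = m ^ (N:ℤ) * (M/m)^v := by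
          rw [div_zpow, zpow_sub₀ (ne_of_gt hm)]
          field_simp
        rw [hrw]
        have hlt1 : (M/m)^v < 1 := by
          exact zpow_lt_one_of_neg₀ (by rw [lt_div_iff₀ hm]; linarith) hneg
        calc m ^ (N:ℤ) * (M/m)^v < m ^ (N:ℤ) * 1 := by
              apply mul_lt_mul_of_pos_left hlt1 (by positivity)
          _ = m ^ N := by rw [mul_one, zpow_natCast]
      exact absurd hvmem (not_le.mpr (lt_of_lt_of_le hkey hmC))
    rcases eq_or_lt_of_le hv0 with hv0' | hv1
    · -- v = 0 : C = m^N
      have hveq : v = 0 := hv0'.symm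
      subst hveq
      have hCeq : C = m ^ N := by
        have h1 := hv.1
        simp only [Set.mem_setOf_eq, zpow_zero, one_mul, sub_zero, zpow_natCast] at h1
        exact le_antisymm h1 hmC
      have hterm : (m ^ ((N:ℤ) - 0) * M ^ ((0:ℤ) - 1) / C) ^ 2 = 1 / M ^ 2 := by
        rw [sub_zero, zpow_natCast, ← hCeq, zero_sub, zpow_neg, zpow_one]
        rw [mul_comm, mul_div_assoc, div_self (ne_of_gt hC), mul_one]
        rw [inv_pow, one_div]
      rw [hterm]
      have hsum : ∑ k, 1 / (c k) ^ 2 ≤ (N:ℝ) * (1/m^2) := by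
        calc ∑ k, 1 / (c k) ^ 2 ≤ ∑ _k : Fin N, 1/m^2 := by
              apply Finset.sum_le_sum
              intro k _
              apply one_div_le_one_div_of_le (by positivity)
              exact pow_le_pow_left₀ (le_of_lt hm) (hc k).1 2
          _ = (N:ℝ) * (1/m^2) := by
              rw [Finset.sum_const, card_univ, Fintype.card_fin, nsmul_eq_mul]
      have e1 : ((N:ℝ) - ((0:ℤ):ℝ))/m^2 = (N:ℝ) * (1/m^2) := by push_cast; ring
      have e2 : (((0:ℤ):ℝ) - 1)/M^2 = -(1/M^2) := by push_cast; ring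
      rw [e1, e2]
      linarith
    · -- 1 ≤ v
      obtain ⟨w, hvw⟩ : ∃ w : ℕ, (w:ℤ) = v := ⟨v.toNat, Int.toNat_of_nonneg hv0⟩
      have hw1 : 1 ≤ w := by omega
      have hwN : w ≤ N := by omega
      have ht2 : C ≤ M^w * m^(N-w) := by
        have h1 := hv.1
        simp only [Set.mem_setOf_eq] at h1
        rwa [← hvw, zpow_natCast, show (N:ℤ) - (w:ℤ) = ((N-w : ℕ):ℤ) by omega,
          zpow_natCast] at h1
      have ht1 : M^(w-1) * m^(N-w+1) < C := by
        have hnot : ¬ C ≤ M ^ (v-1) * m ^ ((N:ℤ) - (v-1)) := by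
          intro h
          have := hv.2 h
          omega
        push_neg at hnot
        rwa [show v - 1 = ((w-1 : ℕ):ℤ) by omega, zpow_natCast,
          show (N:ℤ) - ((w-1:ℕ):ℤ) = ((N-w+1 : ℕ):ℤ) by omega, zpow_natCast] at hnot
      have hRHSeq : ((N:ℝ) - v) / m ^ 2 + ((v:ℝ) - 1) / M ^ 2 +
          (m ^ ((N:ℤ) - v) * M ^ (v - 1) / C) ^ 2 =
          ((N-w : ℕ) : ℝ)/m^2 + ((w-1 : ℕ) : ℝ)/M^2 + (m^(N-w)*M^(w-1)/C)^2 := by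
        have hwvR : ((w:ℕ):ℝ) = ((v:ℤ):ℝ) := by exact_mod_cast hvw
        rw [show (N:ℤ) - v = ((N-w : ℕ):ℤ) by omega, zpow_natCast,
          show v - 1 = ((w-1 : ℕ):ℤ) by omega, zpow_natCast,
          show ((N-w : ℕ) : ℝ) = (N:ℝ) - v by rw [Nat.cast_sub hwN, hwvR],
          show ((w-1 : ℕ) : ℝ) = ((v:ℤ):ℝ) - 1 by rw [Nat.cast_sub hw1, hwvR, Nat.cast_one]]
      rw [hRHSeq]
      apply aux_key N m M C _ hm
        (fun c' hc' hp' => aux_base N hN m M C hm hmM hC w hw1 hwN ht1 ht2 c' hc' hp') N c hc hprod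
      calc (univ.filter fun k => c k ≠ m ∧ c k ≠ M).card ≤ (univ : Finset (Fin N)).card :=
            Finset.card_filter_le _ _
        _ = N := by rw [card_univ, Fintype.card_fin]
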